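/- Let α ≥ 1. If a class C of probability distributions over a countable domain X is η-subtractive α-robustly learnable for every η ∈ (0,1), then C is subtractive 3α-robustly learnable. -/

import Mathlib

open scoped BigOperators ENNReal

namespace RobustDistLearn

variable {X : Type*}

/-- `p` is a probability mass function on `X`. -/
def IsPMF (p : X → ℝ) : Prop := (∀ x, 0 ≤ p x) ∧ ∑' x, p x = 1

/-- Total variation distance between two mass functions:
`d_TV(p,q) = (1/2)·∑ₓ |p x − q x|`. -/
noncomputable def dTV (p q : X → ℝ) : ℝ := (1 / 2) * ∑' x, |p x - q x|

/-- The probability, over a sample `S` of `n` i.i.d. draws from `p`, of the event `E`. -/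
noncomputable def iidProb (p : X → ℝ) (n : ℕ) (E : Set (Fin n → X)) : ℝ :=
  ∑' S : Fin n → X, E.indicator (fun T => ∏ i, p (T i)) S

/-- The mixture `η·q + (1−η)·p`. -/
def mix (η : ℝ) (q p : X → ℝ) : X → ℝ := fun x => η * q x + (1 - η) * p x

/-- `inf_{p' ∈ C} d_TV(p, p')`. -/
noncomputable def distToClass (p : X → ℝ) (C : Set (X → ℝ)) : ℝ := sInf (dTV p '' C)

/-- A learner maps, for each sample size `n`, a tuple `S ∈ Xⁿ` to a distribution over `X`. -/
def IsLearner (A : (n : ℕ) → (Fin n → X) → (X → ℝ)) : Prop := ∀ n S, IsPMF (A n S)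

/-- Realizable learnability of a class `C` of distributions. -/
def RealizablyLearnable (C : Set (X → ℝ)) : Prop :=
  ∃ A : (n : ℕ) → (Fin n → X) → (X → ℝ), IsLearner A ∧
    ∃ nC : ℝ → ℝ → ℕ,
      ∀ p ∈ C, ∀ ε ∈ Set.Ioo (0:ℝ) 1, ∀ δ ∈ Set.Ioo (0:ℝ) 1, ∀ n : ℕ, nC ε δ ≤ n →
        1 - δ ≤ iidProb p n {S | dTV (A n S) p ≤ ε}

/-- `α`-robust (agnostic) learnability. -/
def RobustlyLearnable (C : Set (X → ℝ)) (α : ℝ) : Prop :=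
  ∃ A : (n : ℕ) → (Fin n → X) → (X → ℝ), IsLearner A ∧
    ∃ nC : ℝ → ℝ → ℕ,
      ∀ p : X → ℝ, IsPMF p → ∀ ε ∈ Set.Ioo (0:ℝ) 1, ∀ δ ∈ Set.Ioo (0:ℝ) 1, ∀ n : ℕ, nC ε δ ≤ n →
        1 - δ ≤ iidProb p n {S | dTV (A n S) p ≤ α * distToClass p C + ε}

/-- Additive `α`-robust learnability. -/
def AdditiveRobustlyLearnable (C : Set (X → ℝ)) (α : ℝ) : Prop :=
  ∃ A : (n : ℕ) → (Fin n → X) → (X → ℝ), IsLearner A ∧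
    ∃ nC : ℝ → ℝ → ℕ,
      ∀ η ∈ Set.Ioo (0:ℝ) 1, ∀ q : X → ℝ, IsPMF q → ∀ p ∈ C,
        ∀ ε ∈ Set.Ioo (0:ℝ) 1, ∀ δ ∈ Set.Ioo (0:ℝ) 1, ∀ n : ℕ, nC ε δ ≤ n →
          1 - δ ≤ iidProb (mix η q p) n {S | dTV (A n S) (mix η q p) ≤ α * η + ε}

/-- Huber additive `α`-robust learnability: the guarantee is with respect to the clean `p`. -/
def HuberAdditiveRobustlyLearnable (C : Set (X → ℝ)) (α : ℝ) : Prop :=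
  ∃ A : (n : ℕ) → (Fin n → X) → (X → ℝ), IsLearner A ∧
    ∃ nC : ℝ → ℝ → ℕ,
      ∀ η ∈ Set.Ioo (0:ℝ) 1, ∀ q : X → ℝ, IsPMF q → ∀ p ∈ C,
        ∀ ε ∈ Set.Ioo (0:ℝ) 1, ∀ δ ∈ Set.Ioo (0:ℝ) 1, ∀ n : ℕ, nC ε δ ≤ n →
          1 - δ ≤ iidProb (mix η q p) n {S | dTV (A n S) p ≤ α * η + ε}

/-- Subtractive `α`-robust learnability. -/
def SubtractiveRobustlyLearnable (C : Set (X → ℝ)) (α : ℝ) : Prop :=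
  ∃ A : (n : ℕ) → (Fin n → X) → (X → ℝ), IsLearner A ∧
    ∃ nC : ℝ → ℝ → ℕ,
      ∀ η ∈ Set.Ioo (0:ℝ) 1, ∀ p : X → ℝ, IsPMF p →
        (∃ q : X → ℝ, IsPMF q ∧ mix η q p ∈ C) →
        ∀ ε ∈ Set.Ioo (0:ℝ) 1, ∀ δ ∈ Set.Ioo (0:ℝ) 1, ∀ n : ℕ, nC ε δ ≤ n →
          1 - δ ≤ iidProb p n {S | dTV (A n S) p ≤ α * η + ε}

/-- `η`-`α`-robust learnability (known corruption level `η`). -/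
def EtaRobustlyLearnable (C : Set (X → ℝ)) (η α : ℝ) : Prop :=
  ∃ A : (n : ℕ) → (Fin n → X) → (X → ℝ), IsLearner A ∧
    ∃ nC : ℝ → ℝ → ℕ,
      ∀ p : X → ℝ, IsPMF p → distToClass p C ≤ η →
        ∀ ε ∈ Set.Ioo (0:ℝ) 1, ∀ δ ∈ Set.Ioo (0:ℝ) 1, ∀ n : ℕ, nC ε δ ≤ n →
          1 - δ ≤ iidProb p n {S | dTV (A n S) p ≤ α * η + ε}

/-- `η`-additive `α`-robust learnability (known corruption level `η`). -/
def EtaAdditiveRobustlyLearnable (C : Set (X → ℝ)) (η α : ℝ) : Prop :=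
  ∃ A : (n : ℕ) → (Fin n → X) → (X → ℝ), IsLearner A ∧
    ∃ nC : ℝ → ℝ → ℕ,
      ∀ q : X → ℝ, IsPMF q → ∀ p ∈ C,
        ∀ ε ∈ Set.Ioo (0:ℝ) 1, ∀ δ ∈ Set.Ioo (0:ℝ) 1, ∀ n : ℕ, nC ε δ ≤ n →
          1 - δ ≤ iidProb (mix η q p) n {S | dTV (A n S) (mix η q p) ≤ α * η + ε}

/-- `η`-subtractive `α`-robust learnability (known corruption level `η`). -/
def EtaSubtractiveRobustlyLearnable (C : Set (X → ℝ)) (η α : ℝ) : Prop :=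
  ∃ A : (n : ℕ) → (Fin n → X) → (X → ℝ), IsLearner A ∧
    ∃ nC : ℝ → ℝ → ℕ,
      ∀ p : X → ℝ, IsPMF p →
        (∃ q : X → ℝ, IsPMF q ∧ mix η q p ∈ C) →
        ∀ ε ∈ Set.Ioo (0:ℝ) 1, ∀ δ ∈ Set.Ioo (0:ℝ) 1, ∀ n : ℕ, nC ε δ ≤ n →
          1 - δ ≤ iidProb p n {S | dTV (A n S) p ≤ α * η + ε}

/-- The probability of an event under a `PMF`. -/
noncomputable def pmfProb {Y : Type*} (m : PMF Y) (E : Set Y) : ℝ :=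
  (m.toOuterMeasure E).toReal

/-- `(ε,δ)`-differential privacy of a randomized algorithm on inputs of size `n`. -/
def IsDP {Y : Type*} {n : ℕ} (M : (Fin n → X) → PMF Y) (ε δ : ℝ) : Prop :=
  ∀ x x' : Fin n → X, (∃ i : Fin n, ∀ j : Fin n, j ≠ i → x j = x' j) →
    ∀ B : Set Y,
      (M x).toOuterMeasure B ≤
        ENNReal.ofReal (Real.exp ε) * (M x').toOuterMeasure B + ENNReal.ofReal δ

/-- Probability, jointly over `S ~ pⁿ` and the internal randomness of `M`, of the event `E`
on the output of `M`. -/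
noncomputable def randIidProb {Y : Type*} (p : X → ℝ) (n : ℕ)
    (M : (Fin n → X) → PMF Y) (E : Set Y) : ℝ :=
  ∑' S : Fin n → X, (∏ i, p (S i)) * pmfProb (M S) E

/-- Approximate DP learnability. -/
def ApproxDPLearnable (C : Set (X → ℝ)) : Prop :=
  ∃ Alg : (n : ℕ) → (Fin n → X) → PMF (X → ℝ),
    (∀ n S f, f ∈ (Alg n S).support → IsPMF f) ∧
    ∃ nC : ℝ → ℝ → ℝ → ℝ → ℕ,
      ∀ p ∈ C, ∀ α ∈ Set.Ioo (0:ℝ) 1, ∀ β ∈ Set.Ioo (0:ℝ) 1,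
        ∀ ε ∈ Set.Ioo (0:ℝ) 1, ∀ δ ∈ Set.Ioo (0:ℝ) 1, ∀ n : ℕ, nC α β ε δ ≤ n →
          IsDP (Alg n) ε δ ∧
          1 - β ≤ randIidProb p n (Alg n) {f | dTV p f ≤ α}

/-- Pure DP learnability. -/
def PureDPLearnable (C : Set (X → ℝ)) : Prop :=
  ∃ Alg : (n : ℕ) → (Fin n → X) → PMF (X → ℝ),
    (∀ n S f, f ∈ (Alg n S).support → IsPMF f) ∧
    ∃ nC : ℝ → ℝ → ℝ → ℕ,
      ∀ p ∈ C, ∀ α ∈ Set.Ioo (0:ℝ) 1, ∀ β ∈ Set.Ioo (0:ℝ) 1, ∀ ε ∈ Set.Ioo (0:ℝ) 1,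
        ∀ n : ℕ, nC α β ε ≤ n →
          IsDP (Alg n) ε 0 ∧
          1 - β ≤ randIidProb p n (Alg n) {f | dTV p f ≤ α}

/-- `α`-robust learnability by a possibly randomized learner. -/
def RandRobustlyLearnable (C : Set (X → ℝ)) (α : ℝ) : Prop :=
  ∃ Alg : (n : ℕ) → (Fin n → X) → PMF (X → ℝ),
    (∀ n S f, f ∈ (Alg n S).support → IsPMF f) ∧
    ∃ nC : ℝ → ℝ → ℕ,
      ∀ p : X → ℝ, IsPMF p → ∀ ε ∈ Set.Ioo (0:ℝ) 1, ∀ δ ∈ Set.Ioo (0:ℝ) 1,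
        ∀ n : ℕ, nC ε δ ≤ n →
          1 - δ ≤ randIidProb p n (Alg n) {f | dTV f p ≤ α * distToClass p C + ε}

/-- A class `C` admits `(τ, t, nf)` `r`-robust sample compression. -/
def AdmitsCompression (C : Set (X → ℝ)) (τ t nf : ℝ → ℕ) (r : ℝ) : Prop :=
  ∃ J : List X → List Bool → (X → ℝ),
    (∀ L B, J L B ∈ C) ∧
    ∀ q ∈ C, ∀ p : X → ℝ, IsPMF p → dTV p q ≤ r →
      ∀ ε ∈ Set.Ioo (0:ℝ) 1,
        (2 : ℝ) / 3 ≤ iidProb p (nf ε)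
          {S | ∃ L : List X, ∃ B : List Bool,
            L.length ≤ τ ε ∧ (∀ x ∈ L, ∃ i, S i = x) ∧ B.length ≤ t ε ∧
            dTV (J L B) q ≤ r + ε}

/-- The distribution `q_{i,j,k} = (1−1/j)·δ_{(0,0)} + (1/j − 1/k)·U_{A_i×{2j+1}} + (1/k)·δ_{(i,2j+2)}`
over `ℕ × ℕ`, for a given enumeration `A` of the finite nonempty subsets of `ℕ`. -/
noncomputable def qDist (A : ℕ → Finset ℕ) (i j k : ℕ) : ℕ × ℕ → ℝ := fun x =>
  (if x = (0, 0) then 1 - 1 / (j : ℝ) else 0) +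
  (if x.1 ∈ A i ∧ x.2 = 2 * j + 1 then (1 / (j : ℝ) - 1 / (k : ℝ)) / ((A i).card : ℝ) else 0) +
  (if x = (i, 2 * j + 2) then 1 / (k : ℝ) else 0)

/-- The class `Q_g = {q_{i,j,g(j)} : i, j ∈ ℕ, j ≥ 1}`. -/
def Qg (A : ℕ → Finset ℕ) (g : ℕ → ℕ) : Set (ℕ × ℕ → ℝ) :=
  {p | ∃ i j : ℕ, 1 ≤ j ∧ p = qDist A i j (g j)}

/-- The distribution `(1−γ)·δ_{(0,0)} + γ·U_{B×{2j+1}}` over `ℕ × ℕ`. -/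
noncomputable def pDist (γ : ℝ) (B : Finset ℕ) (j : ℕ) : ℕ × ℕ → ℝ := fun x =>
  (if x = (0, 0) then 1 - γ else 0) +
  (if x.1 ∈ B ∧ x.2 = 2 * j + 1 then γ / (B.card : ℝ) else 0)

/-- `g : ℕ → ℕ` is superlinear: `g(t)/t → ∞`. -/
def Superlinear (g : ℕ → ℕ) : Prop :=
  Filter.Tendsto (fun t : ℕ => (g t : ℝ) / (t : ℝ)) Filter.atTop Filter.atTop



/- ========================= Auxiliary material ========================= -/

section AuxSubtractive

set_option maxHeartbeats 1000000

variable {X : Type*}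

lemma IsPMF.summable' {p : X → ℝ} (hp : IsPMF p) : Summable p := by
  by_contra hs
  have h1 := hp.2
  rw [tsum_eq_zero_of_not_summable hs] at h1
  norm_num at h1

lemma summable_abs_sub {p q : X → ℝ} (hp : IsPMF p) (hq : IsPMF q) :
    Summable fun x => |p x - q x| := by
  apply Summable.of_nonneg_of_le (fun x => abs_nonneg _) (fun x => ?_)
    (hp.summable'.add hq.summable')
  calc |p x - q x| ≤ |p x| + |q x| := abs_sub _ _
    _ = p x + q x := by rw [abs_of_nonneg (hp.1 x), abs_of_nonneg (hq.1 x)]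

lemma dTV_comm (p q : X → ℝ) : dTV p q = dTV q p := by
  unfold dTV; congr 1; exact tsum_congr fun x => abs_sub_comm _ _

lemma dTV_triangle {p q r : X → ℝ} (hp : IsPMF p) (hq : IsPMF q) (hr : IsPMF r) :
    dTV p r ≤ dTV p q + dTV q r := by
  unfold dTV
  rw [← mul_add, ← Summable.tsum_add (summable_abs_sub hp hq) (summable_abs_sub hq hr)]
  apply mul_le_mul_of_nonneg_left _ (by norm_num : (0:ℝ) ≤ 1/2)
  exact Summable.tsum_le_tsum (fun x => abs_sub_le _ _ _)
    (summable_abs_sub hp hr)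
    ((summable_abs_sub hp hq).add (summable_abs_sub hq hr))

lemma dTV_le_one {p q : X → ℝ} (hp : IsPMF p) (hq : IsPMF q) : dTV p q ≤ 1 := by
  unfold dTV
  have h1 : ∑' x, |p x - q x| ≤ ∑' x, (p x + q x) := by
    apply Summable.tsum_le_tsum (fun x => ?_) (summable_abs_sub hp hq)
      (hp.summable'.add hq.summable')
    calc |p x - q x| ≤ |p x| + |q x| := abs_sub _ _
      _ = p x + q x := by rw [abs_of_nonneg (hp.1 x), abs_of_nonneg (hq.1 x)]
  have h2 : ∑' x, (p x + q x) = 2 := by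
    rw [Summable.tsum_add hp.summable' hq.summable', hp.2, hq.2]; norm_num
  linarith

lemma summable_tsum_prod {p : X → ℝ} (hp : IsPMF p) (n : ℕ) :
    Summable (fun S : Fin n → X => ∏ i, p (S i)) ∧
      ∑' S : Fin n → X, ∏ i, p (S i) = 1 := by
  induction n with
  | zero =>
      have hu : ∀ S : Fin 0 → X, (∏ i, p (S i)) = 1 := fun S => by simp
      haveI : Unique (Fin 0 → X) := ⟨⟨fun i => i.elim0⟩, fun f => funext fun i => i.elim0⟩
      constructor
      · haveI : Finite (Fin 0 → X) := Finite.of_subsingleton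
        exact Summable.of_finite
      · rw [tsum_eq_single (default : Fin 0 → X)
          (fun b hb => absurd (Subsingleton.elim b default) hb)]
        exact hu _
  | succ n ih =>
      obtain ⟨ihs, iht⟩ := ih
      set e : X × (Fin n → X) ≃ (Fin (n+1) → X) := Fin.consEquiv (fun _ => X) with he
      have hF : Summable (fun z : X × (Fin n → X) => p z.1 * ∏ i, p (z.2 i)) :=
        Summable.mul_of_nonneg (f := p) (g := fun T : Fin n → X => ∏ i, p (T i))
          hp.summable' ihs (fun x => hp.1 x)
          (fun T => Finset.prod_nonneg fun i _ => hp.1 _)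
      have hcomp : ∀ z : X × (Fin n → X),
          (∏ i, p ((e z) i)) = p z.1 * ∏ i, p (z.2 i) := by
        intro z
        rw [Fin.prod_univ_succ]
        simp [he, Fin.consEquiv]
      constructor
      · rw [← e.summable_iff]
        apply Summable.congr hF
        intro z
        exact (hcomp z).symm
      · rw [← e.tsum_eq]
        calc ∑' z : X × (Fin n → X), ∏ i, p ((e z) i)
            = ∑' z : X × (Fin n → X), p z.1 * ∏ i, p (z.2 i) := tsum_congr hcomp
          _ = (∑' x, p x) * ∑' T : Fin n → X, ∏ i, p (T i) :=
              (Summable.tsum_mul_tsum (f := p) (g := fun T : Fin n → X => ∏ i, p (T i))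
                hp.summable' ihs hF).symm
          _ = 1 := by rw [hp.2, iht, one_mul]

lemma summable_indicator_prod {p : X → ℝ} (hp : IsPMF p) (n : ℕ) (E : Set (Fin n → X)) :
    Summable (E.indicator fun T => ∏ i, p (T i)) := by
  refine Summable.of_nonneg_of_le (fun S => ?_) (fun S => ?_) (summable_tsum_prod hp n).1
  · exact Set.indicator_nonneg (fun T _ => Finset.prod_nonneg fun i _ => hp.1 _) S
  · exact Set.indicator_le_self' (fun T _ => Finset.prod_nonneg fun i _ => hp.1 _) S

lemma iidProb_univ {p : X → ℝ} (hp : IsPMF p) (n : ℕ) :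
    iidProb p n Set.univ = 1 := by
  rw [iidProb]
  simp only [Set.indicator_univ]
  exact (summable_tsum_prod hp n).2

lemma iidProb_mono {p : X → ℝ} (hp : IsPMF p) {n : ℕ} {E F : Set (Fin n → X)}
    (hEF : E ⊆ F) : iidProb p n E ≤ iidProb p n F := by
  apply Summable.tsum_le_tsum _ (summable_indicator_prod hp n E) (summable_indicator_prod hp n F)
  intro S
  by_cases hS : S ∈ E
  · rw [Set.indicator_of_mem hS, Set.indicator_of_mem (hEF hS)]
  · rw [Set.indicator_of_notMem hS]
    exact Set.indicator_nonneg (fun T _ => Finset.prod_nonneg fun i _ => hp.1 _) S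

lemma iidProb_compl {p : X → ℝ} (hp : IsPMF p) {n : ℕ} (E : Set (Fin n → X)) :
    iidProb p n Eᶜ = 1 - iidProb p n E := by
  have key : iidProb p n E + iidProb p n Eᶜ = 1 := by
    rw [iidProb, iidProb,
      ← Summable.tsum_add (summable_indicator_prod hp n E) (summable_indicator_prod hp n Eᶜ),
      ← (summable_tsum_prod hp n).2]
    apply tsum_congr
    intro S
    exact congrFun (Set.indicator_self_add_compl E fun T => ∏ i, p (T i)) S
  linarith

lemma iidProb_biUnion_le {p : X → ℝ} (hp : IsPMF p) {n : ℕ} {ι : Type*} (F : Finset ι)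
    (E : ι → Set (Fin n → X)) :
    iidProb p n (⋃ i ∈ F, E i) ≤ ∑ i ∈ F, iidProb p n (E i) := by
  have hnn : ∀ (G : Set (Fin n → X)) (S : Fin n → X),
      0 ≤ G.indicator (fun T => ∏ i, p (T i)) S :=
    fun G S => Set.indicator_nonneg (fun T _ => Finset.prod_nonneg fun i _ => hp.1 _) S
  have hle : ∀ S, (⋃ i ∈ F, E i).indicator (fun T => ∏ i, p (T i)) S ≤
      ∑ i ∈ F, (E i).indicator (fun T => ∏ i, p (T i)) S := by
    intro S
    by_cases hS : S ∈ ⋃ i ∈ F, E i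
    · rw [Set.indicator_of_mem hS]
      obtain ⟨i, hiF, hiS⟩ : ∃ i ∈ F, S ∈ E i := by simpa using hS
      calc (∏ j, p (S j)) = (E i).indicator (fun T => ∏ j, p (T j)) S :=
            (Set.indicator_of_mem hiS (fun T => ∏ j, p (T j))).symm
        _ ≤ ∑ i ∈ F, (E i).indicator (fun T => ∏ j, p (T j)) S :=
            Finset.single_le_sum (fun j _ => hnn (E j) S) hiF
    · rw [Set.indicator_of_notMem hS]
      exact Finset.sum_nonneg fun i _ => hnn (E i) S
  calc iidProb p n (⋃ i ∈ F, E i)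
      ≤ ∑' S : Fin n → X, ∑ i ∈ F, (E i).indicator (fun T => ∏ j, p (T j)) S :=
        Summable.tsum_le_tsum hle (summable_indicator_prod hp n _)
          (summable_sum fun i _ => summable_indicator_prod hp n (E i))
    _ = ∑ i ∈ F, iidProb p n (E i) :=
        Summable.tsum_finsetSum fun i _ => summable_indicator_prod hp n (E i)

lemma iidProb_biInter_ge {p : X → ℝ} (hp : IsPMF p) {n : ℕ} {ι : Type*} (F : Finset ι)
    (E : ι → Set (Fin n → X)) {d : ℝ} (h : ∀ i ∈ F, 1 - d ≤ iidProb p n (E i)) :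
    1 - F.card * d ≤ iidProb p n (⋂ i ∈ F, E i) := by
  have hc : (⋂ i ∈ F, E i) = (⋃ i ∈ F, (E i)ᶜ)ᶜ := by
    ext S; simp
  rw [hc, iidProb_compl hp]
  have h1 := iidProb_biUnion_le hp F (fun i => (E i)ᶜ)
  have h3 : ∑ i ∈ F, iidProb p n ((E i)ᶜ) ≤ (F.card : ℝ) * d := by
    calc ∑ i ∈ F, iidProb p n ((E i)ᶜ) ≤ ∑ _i ∈ F, d := by
          apply Finset.sum_le_sum
          intro i hi
          rw [iidProb_compl hp]
          linarith [h i hi]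
      _ = (F.card : ℝ) * d := by rw [Finset.sum_const, nsmul_eq_mul]
  linarith

lemma mix_realizable_mono {C : Set (X → ℝ)} {p : X → ℝ} (hp : IsPMF p)
    {η η' : ℝ} (h0 : 0 < η) (hle : η ≤ η') (h1 : η' < 1)
    (hex : ∃ q, IsPMF q ∧ mix η q p ∈ C) : ∃ q', IsPMF q' ∧ mix η' q' p ∈ C := by
  obtain ⟨q, hq, hmem⟩ := hex
  have hη' : 0 < η' := lt_of_lt_of_le h0 hle
  refine ⟨fun x => (η * q x + (η' - η) * p x) / η', ⟨fun x => ?_, ?_⟩, ?_⟩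
  · apply div_nonneg _ hη'.le
    have h2 := hq.1 x; have h3 := hp.1 x
    nlinarith
  · have hs1 : Summable (fun x => η * q x) := hq.summable'.mul_left η
    have hs2 : Summable (fun x => (η' - η) * p x) := hp.summable'.mul_left _
    have hd : ∑' x, (η * q x + (η' - η) * p x) / η'
        = (∑' x, (η * q x + (η' - η) * p x)) / η' := tsum_div_const
    rw [hd, Summable.tsum_add hs1 hs2, tsum_mul_left, tsum_mul_left, hq.2, hp.2]
    field_simp
    ring
  · have heq : mix η' (fun x => (η * q x + (η' - η) * p x) / η') p = mix η q p := by
      funext x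
      unfold mix
      field_simp
      ring
    rw [heq]; exact hmem

/-- A grid point `k / t²`. -/
noncomputable def gridPt (t k : ℕ) : ℝ := (k : ℝ) / ((t : ℝ) ^ 2)

lemma gridPt_mem {t k : ℕ} (ht : 2 ≤ t) (hk1 : 1 ≤ k) (hk2 : k ≤ t ^ 2 - 1) :
    gridPt t k ∈ Set.Ioo (0 : ℝ) 1 := by
  have htR : (2 : ℝ) ≤ (t : ℝ) := by exact_mod_cast ht
  have ht0 : (0 : ℝ) < (t : ℝ) ^ 2 := by nlinarith
  have hkR : (1 : ℝ) ≤ (k : ℝ) := by exact_mod_cast hk1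
  have h4 : 1 ≤ t ^ 2 := by nlinarith
  have hk2' : (k : ℝ) ≤ (t : ℝ) ^ 2 - 1 := by
    have hc : (k : ℝ) ≤ ((t ^ 2 - 1 : ℕ) : ℝ) := by exact_mod_cast hk2
    rw [Nat.cast_sub h4] at hc
    push_cast at hc
    linarith
  constructor
  · exact div_pos (by linarith) ht0
  · rw [gridPt, div_lt_one ht0]; linarith

/-- The grid point `k/t²` as an element of `(0,1)`, with a default value. -/
noncomputable def memPt (t k : ℕ) : Set.Ioo (0:ℝ) 1 :=
  if h : gridPt t k ∈ Set.Ioo (0:ℝ) 1 then ⟨gridPt t k, h⟩ else ⟨1/2, by norm_num⟩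

lemma memPt_val {t k : ℕ} (h : gridPt t k ∈ Set.Ioo (0:ℝ) 1) :
    ((memPt t k : Set.Ioo (0:ℝ) 1) : ℝ) = gridPt t k := by
  rw [memPt, dif_pos h]

open Classical in
/-- Lepski-style selection among candidates `c k` with radii `r k`. -/
noncomputable def selIdx (c : ℕ → X → ℝ) (r : ℕ → ℝ) (N : ℕ) : ℕ :=
  if h : ∃ k, 1 ≤ k ∧ k ≤ N - 1 ∧ ∀ j, k ≤ j → j ≤ N - 1 → dTV (c k) (c j) ≤ r k + r j
  then Nat.find h else N - 1

lemma selIdx_bound {p : X → ℝ} (hp : IsPMF p) {c : ℕ → X → ℝ} (hc : ∀ k, IsPMF (c k))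
    {r : ℕ → ℝ} (hr : Monotone r) {N kstar : ℕ}
    (hk1 : 1 ≤ kstar) (hk2 : kstar ≤ N - 1)
    (hgood : ∀ k, kstar ≤ k → k ≤ N - 1 → dTV (c k) p ≤ r k) :
    dTV (c (selIdx c r N)) p ≤ 3 * r kstar := by
  classical
  have hPstar : 1 ≤ kstar ∧ kstar ≤ N - 1 ∧ ∀ j, kstar ≤ j → j ≤ N - 1 →
      dTV (c kstar) (c j) ≤ r kstar + r j := by
    refine ⟨hk1, hk2, fun j hj1 hj2 => ?_⟩
    calc dTV (c kstar) (c j) ≤ dTV (c kstar) p + dTV p (c j) :=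
          dTV_triangle (hc _) hp (hc _)
      _ ≤ r kstar + r j := add_le_add (hgood _ le_rfl hk2)
          (by rw [dTV_comm]; exact hgood _ hj1 hj2)
  have hex : ∃ k, 1 ≤ k ∧ k ≤ N - 1 ∧ ∀ j, k ≤ j → j ≤ N - 1 →
      dTV (c k) (c j) ≤ r k + r j := ⟨kstar, hPstar⟩
  rw [selIdx, dif_pos hex]
  have hfind := Nat.find_spec hex
  have hle : Nat.find hex ≤ kstar := Nat.find_min' hex hPstar
  obtain ⟨h1, h2, h3⟩ := hfind
  have hd : dTV (c (Nat.find hex)) (c kstar) ≤ r (Nat.find hex) + r kstar := h3 kstar hle hk2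
  have hrr : r (Nat.find hex) ≤ r kstar := hr hle
  calc dTV (c (Nat.find hex)) p
      ≤ dTV (c (Nat.find hex)) (c kstar) + dTV (c kstar) p := dTV_triangle (hc _) (hc _) hp
    _ ≤ (r (Nat.find hex) + r kstar) + r kstar := add_le_add hd (hgood _ le_rfl hk2)
    _ ≤ 3 * r kstar := by linarith

/-- Cumulative sample size requirement. -/
def Mreq (f : ℕ → ℕ) (t : ℕ) : ℕ := (Finset.range (t+1)).sup fun s => max s (f s)

lemma le_Mreq_self (f : ℕ → ℕ) (t : ℕ) : t ≤ Mreq f t :=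
  le_trans (le_max_left t (f t))
    (Finset.le_sup (f := fun s => max s (f s)) (Finset.self_mem_range_succ t))

lemma f_le_Mreq (f : ℕ → ℕ) (t : ℕ) : f t ≤ Mreq f t :=
  le_trans (le_max_right t (f t))
    (Finset.le_sup (f := fun s => max s (f s)) (Finset.self_mem_range_succ t))

/-- The grid-resolution parameter used at sample size `n`. -/
def tOf (f : ℕ → ℕ) (n : ℕ) : ℕ := Nat.findGreatest (fun t => 2 ≤ t ∧ Mreq f t ≤ n) n

lemma tOf_ge (f : ℕ → ℕ) {T n : ℕ} (hT : 2 ≤ T) (hn : Mreq f T ≤ n) : T ≤ tOf f n :=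
  Nat.le_findGreatest (P := fun t => 2 ≤ t ∧ Mreq f t ≤ n)
    (le_trans (le_Mreq_self f T) hn) ⟨hT, hn⟩

lemma tOf_spec (f : ℕ → ℕ) {T n : ℕ} (hT : 2 ≤ T) (hn : Mreq f T ≤ n) :
    2 ≤ tOf f n ∧ Mreq f (tOf f n) ≤ n :=
  Nat.findGreatest_spec (P := fun t => 2 ≤ t ∧ Mreq f t ≤ n)
    (le_trans (le_Mreq_self f T) hn) ⟨hT, hn⟩

/-- The combined learner. -/
noncomputable def combLearner (A : Set.Ioo (0:ℝ) 1 → (n : ℕ) → (Fin n → X) → X → ℝ)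
    (f : ℕ → ℕ) (av : ℝ) (n : ℕ) (S : Fin n → X) : X → ℝ :=
  A (memPt (tOf f n)
      (selIdx (fun k => A (memPt (tOf f n) k) n S)
        (fun k => av * gridPt (tOf f n) k + 1 / (tOf f n : ℝ))
        ((tOf f n) ^ 2))) n S

end AuxSubtractive

set_option maxHeartbeats 1600000

/-- if `C` is `η`-subtractive `α`-robustly learnable for every
`η ∈ (0,1)`, then `C` is subtractive `3α`-robustly learnable. -/
theorem eta_subtractive_all_eta_implies_subtractive {X : Type*} [Countable X]
    (C : Set (X → ℝ)) (hC : ∀ p ∈ C, IsPMF p) (α : ℝ) (hα : 1 ≤ α)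
    (h : ∀ η ∈ Set.Ioo (0:ℝ) 1, EtaSubtractiveRobustlyLearnable C η α) :
    SubtractiveRobustlyLearnable C (3 * α) := by
  classical
  have h' : ∀ η : Set.Ioo (0:ℝ) 1,
      ∃ A : (n : ℕ) → (Fin n → X) → (X → ℝ), IsLearner A ∧
        ∃ nC : ℝ → ℝ → ℕ,
          ∀ p : X → ℝ, IsPMF p →
            (∃ q : X → ℝ, IsPMF q ∧ mix η.1 q p ∈ C) →
            ∀ ε ∈ Set.Ioo (0:ℝ) 1, ∀ δ ∈ Set.Ioo (0:ℝ) 1, ∀ n : ℕ, nC ε δ ≤ n →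
              1 - δ ≤ iidProb p n {S | dTV (A n S) p ≤ α * η.1 + ε} :=
    fun η => h η.1 η.2
  choose A hA nCf hnCf using h'
  set f : ℕ → ℕ := fun s =>
    (Finset.Icc 1 (s ^ 2 - 1)).sup fun k => nCf (memPt s k) (1/(s:ℝ)) (1/(s:ℝ)^4) with hf
  refine ⟨combLearner A f α, fun n S => hA _ n S,
    fun ε δ => Mreq f (⌈(3*α+3)/ε + 1/δ⌉₊ + 2), ?_⟩
  intro η hη p hp hreal ε hε δ hδ n hn
  -- basic facts about t
  have hT2 : 2 ≤ ⌈(3*α+3)/ε + 1/δ⌉₊ + 2 := Nat.le_add_left 2 _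
  set t := tOf f n with htdef
  have hTt : ⌈(3*α+3)/ε + 1/δ⌉₊ + 2 ≤ t := tOf_ge f hT2 hn
  have ht2 : 2 ≤ t := le_trans hT2 hTt
  have hMt : Mreq f t ≤ n := (tOf_spec f hT2 hn).2
  have htR : (2:ℝ) ≤ (t:ℝ) := by exact_mod_cast ht2
  have ht0 : (0:ℝ) < (t:ℝ) := by linarith
  have ht20 : (0:ℝ) < (t:ℝ)^2 := by positivity
  have hTreal : (3*α+3)/ε + 1/δ ≤ (t:ℝ) := by
    have h1 : (3*α+3)/ε + 1/δ ≤ ((⌈(3*α+3)/ε + 1/δ⌉₊ : ℕ) : ℝ) := Nat.le_ceil _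
    have h2 : ((⌈(3*α+3)/ε + 1/δ⌉₊ : ℕ) : ℝ) ≤ (t:ℝ) := by
      exact_mod_cast le_trans (Nat.le_add_right _ 2) hTt
    linarith
  have hεpos := hε.1
  have hδpos := hδ.1
  have hd1 : (0:ℝ) < (3*α+3)/ε := by positivity
  have hd2 : (0:ℝ) < 1/δ := by positivity
  have hεt : 3*α+3 ≤ ε * (t:ℝ) := by
    have : (3*α+3)/ε ≤ (t:ℝ) := by linarith
    calc 3*α+3 = ((3*α+3)/ε) * ε := by field_simp
      _ ≤ (t:ℝ) * ε := mul_le_mul_of_nonneg_right this hεpos.le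
      _ = ε * (t:ℝ) := mul_comm _ _
  have hδt : 1/(t:ℝ)^2 ≤ δ := by
    have h1 : 1/δ ≤ (t:ℝ) := by linarith
    have h2 : 1 ≤ δ * (t:ℝ) := by
      calc (1:ℝ) = (1/δ) * δ := by field_simp
        _ ≤ (t:ℝ) * δ := mul_le_mul_of_nonneg_right h1 hδpos.le
        _ = δ * (t:ℝ) := mul_comm _ _
    rw [div_le_iff₀ ht20]
    nlinarith
  by_cases hcase : η ≤ ((t:ℝ)^2 - 1)/(t:ℝ)^2
  · -- main case
    set kstar := ⌈η * (t:ℝ)^2⌉₊ with hks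
    have hηpos := hη.1
    have hk1 : 1 ≤ kstar := by
      rw [hks]
      exact Nat.one_le_iff_ne_zero.mpr (by
        rw [Ne, Nat.ceil_eq_zero, not_le]
        positivity)
    have hNn : 1 ≤ t ^ 2 := by nlinarith
    have hcastN : ((t ^ 2 - 1 : ℕ) : ℝ) = (t:ℝ)^2 - 1 := by
      rw [Nat.cast_sub hNn]; push_cast; ring
    have hkN : kstar ≤ t ^ 2 - 1 := by
      rw [hks]
      apply Nat.ceil_le.mpr
      rw [hcastN]
      calc η * (t:ℝ)^2 ≤ (((t:ℝ)^2 - 1)/(t:ℝ)^2) * (t:ℝ)^2 :=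
            mul_le_mul_of_nonneg_right hcase ht20.le
        _ = (t:ℝ)^2 - 1 := by field_simp
    have hstar_ge : η * (t:ℝ)^2 ≤ (kstar : ℝ) := Nat.le_ceil _
    have hstar_le : (kstar : ℝ) ≤ η * (t:ℝ)^2 + 1 :=
      (Nat.ceil_lt_add_one (by positivity)).le
    have hgp_ge : η ≤ gridPt t kstar := by
      rw [gridPt, le_div_iff₀ ht20]
      linarith
    have hgp_le : gridPt t kstar ≤ η + 1/(t:ℝ)^2 := by
      rw [gridPt, div_le_iff₀ ht20]
      have : (η + 1/(t:ℝ)^2) * (t:ℝ)^2 = η * (t:ℝ)^2 + 1 := by field_simp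
      linarith
    -- the per-level events
    have hEk : ∀ k ∈ Finset.Icc kstar (t ^ 2 - 1),
        1 - 1/(t:ℝ)^4 ≤ iidProb p n
          {S | dTV (A (memPt t k) n S) p ≤ α * gridPt t k + 1/(t:ℝ)} := by
      intro k hk
      rw [Finset.mem_Icc] at hk
      have hk1' : 1 ≤ k := le_trans hk1 hk.1
      have hmem : gridPt t k ∈ Set.Ioo (0:ℝ) 1 := gridPt_mem ht2 hk1' hk.2
      have hval : ((memPt t k : Set.Ioo (0:ℝ) 1) : ℝ) = gridPt t k := memPt_val hmem
      have hηk : η ≤ gridPt t k := by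
        refine le_trans hgp_ge ?_
        unfold gridPt
        exact (div_le_div_iff_of_pos_right ht20).mpr (by exact_mod_cast hk.1)
      have hreal' : ∃ q : X → ℝ, IsPMF q ∧
          mix ((memPt t k : Set.Ioo (0:ℝ) 1) : ℝ) q p ∈ C := by
        rw [hval]
        exact mix_realizable_mono hp hη.1 hηk hmem.2 hreal
      have hthr : nCf (memPt t k) (1/(t:ℝ)) (1/(t:ℝ)^4) ≤ n := by
        have s1 : nCf (memPt t k) (1/(t:ℝ)) (1/(t:ℝ)^4) ≤ f t := by
          rw [hf]
          exact Finset.le_sup (f := fun k => nCf (memPt t k) (1/(t:ℝ)) (1/(t:ℝ)^4))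
            (Finset.mem_Icc.mpr ⟨hk1', hk.2⟩)
        exact le_trans (le_trans s1 (f_le_Mreq f t)) hMt
      have hεmem : (1/(t:ℝ)) ∈ Set.Ioo (0:ℝ) 1 :=
        ⟨by positivity, by rw [div_lt_one ht0]; linarith⟩
      have hδmem : (1/(t:ℝ)^4) ∈ Set.Ioo (0:ℝ) 1 :=
        ⟨by positivity, by rw [div_lt_one (by positivity)]; nlinarith⟩
      have hres := hnCf (memPt t k) p hp hreal' (1/(t:ℝ)) hεmem (1/(t:ℝ)^4) hδmem n hthr
      rwa [hval] at hres
    have hint := iidProb_biInter_ge hp (Finset.Icc kstar (t^2-1))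
      (fun k => {S | dTV (A (memPt t k) n S) p ≤ α * gridPt t k + 1/(t:ℝ)}) hEk
    have hsub : (⋂ k ∈ Finset.Icc kstar (t^2-1),
        {S | dTV (A (memPt t k) n S) p ≤ α * gridPt t k + 1/(t:ℝ)}) ⊆
        {S | dTV (combLearner A f α n S) p ≤ 3 * α * η + ε} := by
      intro S hS
      simp only [Set.mem_iInter, Set.mem_setOf_eq, Finset.mem_Icc] at hS
      have hmono : Monotone (fun k => α * gridPt t k + 1/(t:ℝ)) := by
        intro a b hab
        have hg : gridPt t a ≤ gridPt t b := by
          unfold gridPt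
          exact (div_le_div_iff_of_pos_right ht20).mpr (by exact_mod_cast hab)
        have h5 : α * gridPt t a ≤ α * gridPt t b :=
          mul_le_mul_of_nonneg_left hg (by linarith)
        simpa using add_le_add_right h5 (1/(t:ℝ))
      have hbd := selIdx_bound (c := fun k => A (memPt t k) n S)
        (r := fun k => α * gridPt t k + 1/(t:ℝ)) (N := t^2) (kstar := kstar)
        hp (fun k => hA (memPt t k) n S) hmono hk1 hkN
        (fun k hk1'' hk2'' => hS k ⟨hk1'', hk2''⟩)
      have hcl : combLearner A f α n S =
          A (memPt t (selIdx (fun k => A (memPt t k) n S)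
            (fun k => α * gridPt t k + 1/(t:ℝ)) (t^2))) n S := by
        rw [combLearner, ← htdef]
      rw [Set.mem_setOf_eq, hcl]
      calc dTV (A (memPt t (selIdx (fun k => A (memPt t k) n S)
            (fun k => α * gridPt t k + 1/(t:ℝ)) (t^2))) n S) p
          ≤ 3 * (α * gridPt t kstar + 1/(t:ℝ)) := hbd
        _ ≤ 3 * α * η + ε := by
            have e1 : α * gridPt t kstar ≤ α * (η + 1/(t:ℝ)^2) :=
              mul_le_mul_of_nonneg_left hgp_le (by linarith)
            have e2 : 3*α/(t:ℝ)^2 + 3/(t:ℝ) ≤ ε := by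
              have f1 : 3*α/(t:ℝ)^2 ≤ 3*α/(t:ℝ) := by
                rw [div_le_div_iff₀ ht20 ht0]
                have g1 : (0:ℝ) ≤ 3*α*((t:ℝ)^2 - (t:ℝ)) :=
                  mul_nonneg (by linarith) (by nlinarith)
                nlinarith [g1]
              have f2 : 3*α/(t:ℝ) + 3/(t:ℝ) ≤ ε := by
                rw [← add_div, div_le_iff₀ ht0]
                linarith [hεt]
              linarith
            calc 3 * (α * gridPt t kstar + 1/(t:ℝ))
                ≤ 3 * (α * (η + 1/(t:ℝ)^2) + 1/(t:ℝ)) := by linarith [e1]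
              _ = 3*α*η + (3*α/(t:ℝ)^2 + 3/(t:ℝ)) := by ring
              _ ≤ 3*α*η + ε := by linarith [e2]
    calc 1 - δ
        ≤ 1 - ((Finset.Icc kstar (t^2-1)).card : ℝ) * (1/(t:ℝ)^4) := by
          have hcard : (Finset.Icc kstar (t^2-1)).card ≤ t^2 := by
            rw [Nat.card_Icc]; omega
          have hcardR : ((Finset.Icc kstar (t^2-1)).card : ℝ) ≤ ((t:ℝ))^2 := by
            exact_mod_cast hcard
          have h6 : ((Finset.Icc kstar (t^2-1)).card : ℝ) * (1/(t:ℝ)^4) ≤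
              (t:ℝ)^2 * (1/(t:ℝ)^4) :=
            mul_le_mul_of_nonneg_right hcardR (by positivity)
          have heq : (t:ℝ)^2 * (1/(t:ℝ)^4) = 1/(t:ℝ)^2 := by
            field_simp
          nlinarith [hδt]
      _ ≤ iidProb p n (⋂ k ∈ Finset.Icc kstar (t^2-1),
            {S | dTV (A (memPt t k) n S) p ≤ α * gridPt t k + 1/(t:ℝ)}) := hint
      _ ≤ iidProb p n {S | dTV (combLearner A f α n S) p ≤ 3 * α * η + ε} :=
            iidProb_mono hp hsub
  · -- trivial case: η is so large that the bound is vacuous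
    have huniv : {S : Fin n → X | dTV (combLearner A f α n S) p ≤ 3 * α * η + ε} =
        Set.univ := by
      apply Set.eq_univ_of_forall
      intro S
      simp only [Set.mem_setOf_eq]
      have h1 : dTV (combLearner A f α n S) p ≤ 1 := dTV_le_one (hA _ n S) hp
      have hq : ((t:ℝ)^2 - 1)/(t:ℝ)^2 < η := not_le.mp hcase
      have ht4 : (4:ℝ) ≤ (t:ℝ)^2 := by nlinarith
      have h34 : (3:ℝ)/4 ≤ ((t:ℝ)^2 - 1)/(t:ℝ)^2 := by
        rw [div_le_div_iff₀ (by norm_num) ht20]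
        nlinarith
      have hη34 : (3:ℝ)/4 ≤ η := by linarith
      nlinarith [hε.1]
    rw [huniv, iidProb_univ hp]
    linarith [hδ.1]


end RobustDistLearn
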